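/- Let d ≥ 1, let M be a multi-measurement on ℂ^d with finite outcome set B and nonempty finite setting set Y, and let M̃ be its flag-convexification, the single measurement on outcome set B × Y given by M̃(b,y) := (1/|Y|) • M_{b|y}. Then for every ω ∈ [0,1], the following are equivalent: (i) there exist multi-measurements N and K on ℂ^d with the same outcome and setting sets such that M_{b|y} = ω • N_{b|y} + (1−ω) • K_{b|y} for all b,y, such that for every β : B × Y → ℝ with ∑_{b,y} β(b,y) • M_{b|y} = 0 one has ∑_{b,y} β(b,y) • N_{b|y} = 0 and ∑_{b,y} β(b,y) • K_{b|y} = 0, and such that K is classical (as a multi-measurement); (ii) there exist single measurements Ñ and K̃ on outcome set B × Y such that M̃(b,y) = ω • Ñ(b,y) + (1−ω) • K̃(b,y) for all b,y, such that for every β : B × Y → ℝ with ∑_{b,y} β(b,y) • M̃(b,y) = 0 one has ∑_{b,y} β(b,y) • Ñ(b,y) = 0 and ∑_{b,y} β(b,y) • K̃(b,y) = 0, and such that K̃ is classical (as a single measurement). Consequently, the nonclassical fraction (the infimum of such ω) of M equals that of M̃. -/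

import Mathlib

open Matrix BigOperators
open scoped ComplexOrder

noncomputable section

/-- The noncontextual measurement-assignment polytope of a multi-measurement. -/
def multiPolytope {d : ℕ} {B Y : Type*} [Fintype B] [Fintype Y]
    (M : B × Y → Matrix (Fin d) (Fin d) ℂ) : Set (B × Y → ℝ) :=
  {q | (∀ p, 0 ≤ q p) ∧ (∀ y : Y, ∑ b : B, q (b, y) = 1) ∧
    ∀ β : B × Y → ℝ, (∑ p : B × Y, β p • M p = 0) → (∑ p : B × Y, β p * q p = 0)}

/-- A multi-measurement is classical. -/
def IsClassicalMulti {d : ℕ} {B Y : Type*} [Fintype B] [Fintype Y]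
    (M : B × Y → Matrix (Fin d) (Fin d) ℂ) : Prop :=
  ∃ (n : ℕ) (G : Fin n → Matrix (Fin d) (Fin d) ℂ) (q : Fin n → B × Y → ℝ),
    (∀ l, (G l).PosSemidef) ∧ (∑ l, G l = 1) ∧
    (∀ l, q l ∈ multiPolytope M) ∧
    (∀ b : B, ∀ y : Y, M (b, y) = ∑ l, q l (b, y) • G l)

/-- The noncontextual measurement-assignment polytope of a single measurement (POVM). -/
def povmPolytope {d : ℕ} {C : Type*} [Fintype C]
    (N : C → Matrix (Fin d) (Fin d) ℂ) : Set (C → ℝ) :=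
  {q | (∀ c, 0 ≤ q c) ∧ (∑ c : C, q c = 1) ∧
    ∀ β : C → ℝ, (∑ c : C, β c • N c = 0) → (∑ c : C, β c * q c = 0)}

/-- A single measurement (POVM) is classical. -/
def IsClassicalPOVM {d : ℕ} {C : Type*} [Fintype C]
    (N : C → Matrix (Fin d) (Fin d) ℂ) : Prop :=
  ∃ (n : ℕ) (G : Fin n → Matrix (Fin d) (Fin d) ℂ) (q : Fin n → C → ℝ),
    (∀ l, (G l).PosSemidef) ∧ (∑ l, G l = 1) ∧
    (∀ l, q l ∈ povmPolytope N) ∧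
    (∀ c : C, N c = ∑ l, q l c • G l)

/-- Condition (i): the given multi-measurement `M` admits an `ω`-weighted decomposition into
an arbitrary multi-measurement and a classical multi-measurement, both satisfying the same
operational identities as `M`. -/
def MultiDecomp {d : ℕ} {B Y : Type*} [Fintype B] [Fintype Y]
    (M : B × Y → Matrix (Fin d) (Fin d) ℂ) (ω : ℝ) : Prop :=
  ∃ N K : B × Y → Matrix (Fin d) (Fin d) ℂ,
    (∀ p, (N p).PosSemidef) ∧ (∀ y : Y, ∑ b : B, N (b, y) = 1) ∧
    (∀ p, (K p).PosSemidef) ∧ (∀ y : Y, ∑ b : B, K (b, y) = 1) ∧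
    (∀ p, M p = ω • N p + (1 - ω) • K p) ∧
    (∀ β : B × Y → ℝ, (∑ p : B × Y, β p • M p = 0) →
      (∑ p : B × Y, β p • N p = 0) ∧ (∑ p : B × Y, β p • K p = 0)) ∧
    IsClassicalMulti K

/-- Condition (ii): the flag-convexification `M̃` admits an `ω`-weighted decomposition into
an arbitrary single measurement and a classical single measurement, both satisfying the same
operational identities as `M̃`. -/
def SingleDecomp {d : ℕ} {C : Type*} [Fintype C]
    (N : C → Matrix (Fin d) (Fin d) ℂ) (ω : ℝ) : Prop :=
  ∃ N' K' : C → Matrix (Fin d) (Fin d) ℂ,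
    (∀ c, (N' c).PosSemidef) ∧ (∑ c : C, N' c = 1) ∧
    (∀ c, (K' c).PosSemidef) ∧ (∑ c : C, K' c = 1) ∧
    (∀ c, N c = ω • N' c + (1 - ω) • K' c) ∧
    (∀ β : C → ℝ, (∑ c : C, β c • N c = 0) →
      (∑ c : C, β c • N' c = 0) ∧ (∑ c : C, β c • K' c = 0)) ∧
    IsClassicalPOVM K'

lemma psd_real_smul {d : ℕ} {X : Matrix (Fin d) (Fin d) ℂ} (h : X.PosSemidef) {e : ℝ}
    (he : 0 ≤ e) : (e • X).PosSemidef := by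
  have hX : e • X = (e : ℂ) • X := by
    ext i j; simp [Matrix.smul_apply, Complex.real_smul]
  rw [hX]
  refine ⟨?_, fun x => ?_⟩
  · unfold Matrix.IsHermitian
    rw [conjTranspose_smul, h.1]
    norm_num
  · exact (h.smul (show (0:ℂ) ≤ (e:ℂ) by exact_mod_cast he)).2 x

lemma sum_smul_smul {ι V : Type*} [Fintype ι] [AddCommGroup V] [Module ℝ V]
    (β : ι → ℝ) (X : ι → V) (e : ℝ) :
    ∑ i, β i • (e • X i) = e • ∑ i, β i • X i := by
  rw [Finset.smul_sum]; exact Finset.sum_congr rfl fun i _ => smul_comm _ _ _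

lemma sum_smul_smul_eq_zero_iff {ι V : Type*} [Fintype ι] [AddCommGroup V] [Module ℝ V]
    (β : ι → ℝ) (X : ι → V) {e : ℝ} (he : e ≠ 0) :
    (∑ i, β i • (e • X i) = 0) ↔ ∑ i, β i • X i = 0 := by
  rw [sum_smul_smul]
  constructor
  · intro h
    have := congrArg (fun v => e⁻¹ • v) h
    simpa [smul_smul, inv_mul_cancel₀ he] using this
  · intro h; rw [h, smul_zero]

lemma indicator_sum {B Y : Type*} [Fintype B] [Fintype Y] [DecidableEq Y] {V : Type*} [AddCommGroup V]
    [Module ℝ V] (X : B × Y → V) (y1 y2 : Y) :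
    ∑ p : B × Y, ((if p.2 = y1 then (1:ℝ) else 0) - (if p.2 = y2 then 1 else 0)) • X p
      = (∑ b, X (b, y1)) - ∑ b, X (b, y2) := by
  rw [Fintype.sum_prod_type]
  simp [sub_smul, ite_smul, Finset.sum_sub_distrib, Finset.sum_ite_eq']

lemma setting_sum_eq {B Y : Type*} [Fintype B] [Fintype Y] [Nonempty Y] {V : Type*}
    [AddCommGroup V] [Module ℝ V] (T : B × Y → V)
    (hconst : ∀ y1 y2 : Y, ∑ b, T (b, y1) = ∑ b, T (b, y2)) (y : Y) :
    ∑ b, T (b, y) = (Fintype.card Y : ℝ)⁻¹ • ∑ p : B × Y, T p := by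
  have hm : (Fintype.card Y : ℝ) ≠ 0 := by
    exact_mod_cast Fintype.card_ne_zero
  have h1 : ∑ p : B × Y, T p = (Fintype.card Y : ℝ) • ∑ b, T (b, y) := by
    rw [Fintype.sum_prod_type_right]
    rw [Finset.sum_congr rfl fun y' _ => hconst y' y]
    rw [Finset.sum_const, Finset.card_univ, Nat.cast_smul_eq_nsmul]
  rw [h1, smul_smul, inv_mul_cancel₀ hm, one_smul]

lemma decomp_iff {d : ℕ} {B Y : Type*} [Fintype B] [Fintype Y] [Nonempty Y]
    (M : B × Y → Matrix (Fin d) (Fin d) ℂ)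
    (hpsd : ∀ p, (M p).PosSemidef)
    (hnorm : ∀ y : Y, ∑ b : B, M (b, y) = 1) (ω : ℝ) :
    MultiDecomp M ω ↔ SingleDecomp (fun p : B × Y => ((Fintype.card Y : ℝ)⁻¹) • M p) ω := by
  classical
  set c : ℝ := (Fintype.card Y : ℝ)⁻¹ with hc
  have hm0 : (Fintype.card Y : ℝ) ≠ 0 := by exact_mod_cast Fintype.card_ne_zero
  have hmpos : (0:ℝ) < Fintype.card Y := by exact_mod_cast Fintype.card_pos
  have hc0 : 0 < c := inv_pos.mpr hmpos
  have hcne : c ≠ 0 := ne_of_gt hc0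
  have hcm : c * (Fintype.card Y : ℝ) = 1 := inv_mul_cancel₀ hm0
  have hmc : (Fintype.card Y : ℝ) * c = 1 := mul_inv_cancel₀ hm0
  have sum_total : ∀ (T : B × Y → Matrix (Fin d) (Fin d) ℂ),
      (∀ y, ∑ b, T (b, y) = 1) → ∑ p : B × Y, (c • T p) = 1 := by
    intro T hT
    rw [← Finset.smul_sum, Fintype.sum_prod_type_right]
    rw [Finset.sum_congr rfl fun y _ => hT y, Finset.sum_const, Finset.card_univ,
      ← Nat.cast_smul_eq_nsmul ℝ, smul_smul, hcm, one_smul]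
  constructor
  · rintro ⟨N, K, hNps, hNnorm, hKps, hKnorm, hdec, hbeta,
      n, G, q, hG, hGsum, hq, hrep⟩
    refine ⟨fun p => c • N p, fun p => c • K p,
      fun p => psd_real_smul (hNps p) hc0.le, sum_total N hNnorm,
      fun p => psd_real_smul (hKps p) hc0.le, sum_total K hKnorm, ?_, ?_, ?_⟩
    · intro p
      dsimp only
      rw [hdec p, smul_add, smul_comm c ω, smul_comm c (1 - ω)]
    · intro β hβ
      have hβM : ∑ p : B × Y, β p • M p = 0 :=
        (sum_smul_smul_eq_zero_iff β M hcne).mp hβ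
      obtain ⟨h1, h2⟩ := hbeta β hβM
      exact ⟨(sum_smul_smul_eq_zero_iff β N hcne).mpr h1,
        (sum_smul_smul_eq_zero_iff β K hcne).mpr h2⟩
    · refine ⟨n, G, fun l p => c * q l p, hG, hGsum, ?_, ?_⟩
      · intro l
        obtain ⟨hq0, hqsum, hqβ⟩ := hq l
        refine ⟨fun p => mul_nonneg hc0.le (hq0 p), ?_, ?_⟩
        · rw [← Finset.mul_sum, Fintype.sum_prod_type_right]
          rw [Finset.sum_congr rfl fun y _ => hqsum y, Finset.sum_const, Finset.card_univ,
            nsmul_eq_mul, mul_one, hcm]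
        · intro β hβ
          have h0 : ∑ p : B × Y, β p • K p = 0 :=
            (sum_smul_smul_eq_zero_iff β K hcne).mp hβ
          have h1 := hqβ β h0
          calc ∑ p : B × Y, β p * (c * q l p)
              = c * ∑ p : B × Y, β p * q l p := by
                rw [Finset.mul_sum]; exact Finset.sum_congr rfl fun p _ => by ring
            _ = 0 := by rw [h1, mul_zero]
      · rintro ⟨b, y⟩
        dsimp only
        rw [hrep b y, Finset.smul_sum]
        exact Finset.sum_congr rfl fun l _ => smul_smul c (q l (b, y)) (G l)
  · rintro ⟨N', K', hN'ps, hN'sum, hK'ps, hK'sum, hdec, hbeta,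
      n, G, q, hG, hGsum, hq, hrep⟩
    have hβM : ∀ y1 y2 : Y, ∑ p : B × Y,
        ((if p.2 = y1 then (1:ℝ) else 0) - (if p.2 = y2 then 1 else 0)) • (c • M p) = 0 := by
      intro y1 y2
      rw [indicator_sum (fun p => c • M p) y1 y2]
      rw [← Finset.smul_sum, ← Finset.smul_sum, hnorm y1, hnorm y2, sub_self]
    have hN'const : ∀ y1 y2 : Y, ∑ b, N' (b, y1) = ∑ b, N' (b, y2) := by
      intro y1 y2
      have h := (hbeta _ (hβM y1 y2)).1
      rw [indicator_sum] at h
      exact sub_eq_zero.mp h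
    have hK'const : ∀ y1 y2 : Y, ∑ b, K' (b, y1) = ∑ b, K' (b, y2) := by
      intro y1 y2
      have h := (hbeta _ (hβM y1 y2)).2
      rw [indicator_sum] at h
      exact sub_eq_zero.mp h
    have hN'y : ∀ y : Y, ∑ b, N' (b, y) = c • 1 := by
      intro y; rw [setting_sum_eq N' hN'const y, hN'sum]
    have hK'y : ∀ y : Y, ∑ b, K' (b, y) = c • 1 := by
      intro y; rw [setting_sum_eq K' hK'const y, hK'sum]
    have hMp : ∀ p, M p = (Fintype.card Y : ℝ) • (c • M p) := by
      intro p; rw [smul_smul, hmc, one_smul]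
    refine ⟨fun p => (Fintype.card Y : ℝ) • N' p, fun p => (Fintype.card Y : ℝ) • K' p,
      fun p => psd_real_smul (hN'ps p) hmpos.le, ?_,
      fun p => psd_real_smul (hK'ps p) hmpos.le, ?_, ?_, ?_, ?_⟩
    · intro y
      rw [← Finset.smul_sum, hN'y y, smul_smul, hmc, one_smul]
    · intro y
      rw [← Finset.smul_sum, hK'y y, smul_smul, hmc, one_smul]
    · intro p
      have hdecp := hdec p
      dsimp only at hdecp
      dsimp only
      rw [hMp p, hdecp, smul_add, smul_comm (Fintype.card Y : ℝ) ω,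
        smul_comm (Fintype.card Y : ℝ) (1 - ω)]
    · intro β hβ
      have hβ' : ∑ p : B × Y, β p • (c • M p) = 0 :=
        (sum_smul_smul_eq_zero_iff β M hcne).mpr hβ
      obtain ⟨h1, h2⟩ := hbeta β hβ'
      exact ⟨(sum_smul_smul_eq_zero_iff β N' hm0).mpr h1,
        (sum_smul_smul_eq_zero_iff β K' hm0).mpr h2⟩
    · refine ⟨n, G, fun l p => (Fintype.card Y : ℝ) * q l p, hG, hGsum, ?_, ?_⟩
      · intro l
        obtain ⟨hq0, hqsum, hqβ⟩ := hq l
        have hqconst : ∀ y1 y2 : Y, ∑ b, q l (b, y1) = ∑ b, q l (b, y2) := by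
          intro y1 y2
          have hK'0 : ∑ p : B × Y,
              ((if p.2 = y1 then (1:ℝ) else 0) - (if p.2 = y2 then 1 else 0)) • K' p = 0 := by
            rw [indicator_sum]
            exact sub_eq_zero.mpr (hK'const y1 y2)
          have h := hqβ _ hK'0
          have h' : ∑ p : B × Y,
              ((if p.2 = y1 then (1:ℝ) else 0) - (if p.2 = y2 then 1 else 0)) • q l p = 0 := by
            simpa [smul_eq_mul] using h
          rw [indicator_sum] at h'
          exact sub_eq_zero.mp h'
        have hqy : ∀ y : Y, ∑ b, q l (b, y) = c := by
          intro y
          rw [setting_sum_eq (q l) hqconst y, hqsum, smul_eq_mul, mul_one]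
        refine ⟨fun p => mul_nonneg hmpos.le (hq0 p), ?_, ?_⟩
        · intro y
          rw [← Finset.mul_sum, hqy y, hmc]
        · intro β hβ
          have h0 : ∑ p : B × Y, β p • K' p = 0 :=
            (sum_smul_smul_eq_zero_iff β K' hm0).mp hβ
          have h1 := hqβ β h0
          calc ∑ p : B × Y, β p * ((Fintype.card Y : ℝ) * q l p)
              = (Fintype.card Y : ℝ) * ∑ p : B × Y, β p * q l p := by
                rw [Finset.mul_sum]; exact Finset.sum_congr rfl fun p _ => by ring
            _ = 0 := by rw [h1, mul_zero]
      · intro b y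
        dsimp only
        rw [hrep (b, y), Finset.smul_sum]
        exact Finset.sum_congr rfl fun l' _ => smul_smul (Fintype.card Y : ℝ) (q l' (b, y)) (G l')

theorem nonclassical_fraction_invariant_under_flag_convexification
    {d : ℕ} (hd : 1 ≤ d) {B Y : Type*} [Fintype B] [Fintype Y] [Nonempty Y]
    (M : B × Y → Matrix (Fin d) (Fin d) ℂ)
    (hpsd : ∀ p, (M p).PosSemidef)
    (hnorm : ∀ y : Y, ∑ b : B, M (b, y) = 1) :
    (∀ ω ∈ Set.Icc (0 : ℝ) 1,
        (MultiDecomp M ω ↔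
          SingleDecomp (fun p : B × Y => ((Fintype.card Y : ℝ)⁻¹) • M p) ω)) ∧
      sInf {ω ∈ Set.Icc (0 : ℝ) 1 | MultiDecomp M ω} =
        sInf {ω ∈ Set.Icc (0 : ℝ) 1 |
          SingleDecomp (fun p : B × Y => ((Fintype.card Y : ℝ)⁻¹) • M p) ω} := by
  constructor
  · exact fun ω _ => decomp_iff M hpsd hnorm ω
  · congr 1
    ext ω
    simp only [Set.mem_setOf_eq]
    exact and_congr_right fun _ => decomp_iff M hpsd hnorm ω
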